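/- For the two-point Fleming-Viot process, the first coordinate (η_t(1)) is a birth-death process on {0,…,N} with birth rates b_n = (N−n)(b + p₀(2)·n/(N−1)) and death rates d_n = n(a + p₀(1)·(N−n)/(N−1)), and its reversible invariant distribution is π(n) = u₀ · binom(N,n) · ∏_{k=1}^n (b(N−1)+(k−1)p₀(2))/(a(N−1)+(N−k)p₀(1)), i.e., π satisfies the detailed balance π(n)b_n = π(n+1)d_{n+1} for 0 ≤ n ≤ N−1. -/

import Mathlib

/-- Birth rate of the two-point Fleming-Viot marginal: `b_n = (N-n)(b + p₂ n/(N-1))`. -/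
noncomputable def bdBirth (N : ℕ) (b p2 : ℝ) (n : ℕ) : ℝ :=
  ((N : ℝ) - n) * (b + p2 * n / ((N : ℝ) - 1))

/-- Death rate of the two-point Fleming-Viot marginal: `d_n = n(a + p₁ (N-n)/(N-1))`. -/
noncomputable def bdDeath (N : ℕ) (a p1 : ℝ) (n : ℕ) : ℝ :=
  (n : ℝ) * (a + p1 * ((N : ℝ) - n) / ((N : ℝ) - 1))

/-- Candidate invariant distribution
`π(n) = u₀ binom(N,n) ∏_{k=1}^n (b(N-1)+(k-1)p₂)/(a(N-1)+(N-k)p₁)`. -/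
noncomputable def bdPi (N : ℕ) (a b p1 p2 u0 : ℝ) (n : ℕ) : ℝ :=
  u0 * (N.choose n : ℝ) *
    ∏ k ∈ Finset.Icc 1 n, (b * ((N : ℝ) - 1) + ((k : ℝ) - 1) * p2) /
      (a * ((N : ℝ) - 1) + ((N : ℝ) - k) * p1)

/-- The first coordinate of the two-point Fleming-Viot process is a birth-death process
with rates `b_n`, `d_n`, and `π` is its reversible invariant distribution, i.e. `π`
satisfies the detailed balance `π(n)b_n = π(n+1)d_{n+1}`. -/
theorem stmt_16 (N : ℕ) (hN : 2 ≤ N) (a b p1 p2 : ℝ) (ha : 0 < a) (hb : 0 < b)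
    (hp1 : 0 ≤ p1) (hp2 : 0 ≤ p2) (u0 : ℝ) (hu0 : 0 < u0) :
    (∀ f : ℕ → ℝ, ∀ η : Fin 2 → ℕ, η 0 + η 1 = N →
      (η 0 : ℝ) * (a + p1 * (η 1 : ℝ) / ((N : ℝ) - 1)) * (f (η 0 - 1) - f (η 0)) +
          (η 1 : ℝ) * (b + p2 * (η 0 : ℝ) / ((N : ℝ) - 1)) * (f (η 0 + 1) - f (η 0)) =
        bdBirth N b p2 (η 0) * (f (η 0 + 1) - f (η 0)) +
          bdDeath N a p1 (η 0) * (f (η 0 - 1) - f (η 0))) ∧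
    (∀ n : ℕ, n ≤ N - 1 →
      bdPi N a b p1 p2 u0 n * bdBirth N b p2 n =
        bdPi N a b p1 p2 u0 (n + 1) * bdDeath N a p1 (n + 1)) := by
  have hN1 : (N : ℝ) - 1 ≠ 0 := by
    have : (2 : ℝ) ≤ (N : ℝ) := by exact_mod_cast hN
    linarith
  constructor
  · intro f η h
    have h1 : (η 1 : ℝ) = (N : ℝ) - (η 0 : ℝ) := by
      have : (η 0 : ℝ) + (η 1 : ℝ) = (N : ℝ) := by exact_mod_cast h
      linarith
    rw [h1]
    unfold bdBirth bdDeath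
    ring
  · intro n hn
    have hnN : n + 1 ≤ N := by omega
    have hD : 0 < a * ((N : ℝ) - 1) + ((N : ℝ) - (n + 1 : ℕ)) * p1 := by
      have h1 : (1 : ℝ) ≤ (N : ℝ) - 1 := by
        have : (2 : ℝ) ≤ (N : ℝ) := by exact_mod_cast hN
        linarith
      have h2 : (0 : ℝ) ≤ (N : ℝ) - (n + 1 : ℕ) := by
        have : ((n + 1 : ℕ) : ℝ) ≤ (N : ℝ) := by exact_mod_cast hnN
        linarith
      nlinarith
    have hchoose : ((N.choose (n + 1)) : ℝ) * ((n : ℝ) + 1) =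
        ((N.choose n) : ℝ) * ((N : ℝ) - (n : ℝ)) := by
      have := Nat.choose_succ_right_eq N n
      have hcast : ((N - n : ℕ) : ℝ) = (N : ℝ) - (n : ℝ) := by
        have : n ≤ N := by omega
        push_cast [this]; ring
      calc ((N.choose (n + 1)) : ℝ) * ((n : ℝ) + 1)
          = ((N.choose (n + 1) * (n + 1) : ℕ) : ℝ) := by push_cast; ring
        _ = ((N.choose n * (N - n) : ℕ) : ℝ) := by rw [this]
        _ = ((N.choose n) : ℝ) * ((N : ℝ) - (n : ℝ)) := by push_cast [hcast]; ring
    unfold bdPi bdBirth bdDeath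
    rw [Finset.prod_Icc_succ_top (by omega : 1 ≤ n + 1)]
    push_cast
    push_cast at hchoose hD
    have hPd : 0 < ∏ x ∈ Finset.Icc 1 n, (a * ((N : ℝ) - 1) + ((N : ℝ) - (x : ℕ)) * p1) := by
      apply Finset.prod_pos
      intro x hx
      have hx1 := (Finset.mem_Icc.mp hx).2
      have h1 : (1 : ℝ) ≤ (N : ℝ) - 1 := by
        have : (2 : ℝ) ≤ (N : ℝ) := by exact_mod_cast hN
        linarith
      have h2 : (0 : ℝ) ≤ (N : ℝ) - (x : ℕ) := by
        have : ((x : ℕ) : ℝ) ≤ (N : ℝ) := by exact_mod_cast (by omega : x ≤ N)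
        linarith
      nlinarith
    push_cast at hPd
    rw [Finset.prod_div_distrib]
    have hd : a + p1 * ((N:ℝ) - ((n:ℝ) + 1)) / ((N:ℝ) - 1) =
        (a * ((N:ℝ) - 1) + ((N:ℝ) - ((n:ℝ)+1)) * p1) / ((N:ℝ) - 1) := by
      field_simp
    have hbb : b + p2 * (n:ℝ) / ((N:ℝ) - 1) = (b * ((N:ℝ) - 1) + ((n:ℝ) + 1 - 1) * p2) / ((N:ℝ) - 1) := by
      field_simp
      ring
    rw [hd, hbb]
    have e : (a * ((N:ℝ) - 1) + ((N:ℝ) - ((n:ℝ)+1)) * p1) * (a * ((N:ℝ) - 1) + ((N:ℝ) - ((n:ℝ)+1)) * p1)⁻¹ = 1 :=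
      mul_inv_cancel₀ hD.ne'
    linear_combination (-(u0 * (∏ x ∈ Finset.Icc 1 n, (b * ((N:ℝ) - 1) + ((x:ℝ) - 1) * p2)) /
      (∏ x ∈ Finset.Icc 1 n, (a * ((N:ℝ) - 1) + ((N:ℝ) - (x:ℝ)) * p1)) *
      (b * ((N:ℝ) - 1) + ((n:ℝ) + 1 - 1) * p2) / ((N:ℝ) - 1))) * hchoose +
      (-(u0 * (∏ x ∈ Finset.Icc 1 n, (b * ((N:ℝ) - 1) + ((x:ℝ) - 1) * p2)) /
      (∏ x ∈ Finset.Icc 1 n, (a * ((N:ℝ) - 1) + ((N:ℝ) - (x:ℝ)) * p1)) *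
      (b * ((N:ℝ) - 1) + ((n:ℝ) + 1 - 1) * p2) / ((N:ℝ) - 1)) * ((N.choose (n + 1) : ℕ) : ℝ) * ((n:ℝ) + 1)) * e
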